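/- For $b, m, h > 0$ with $h > h^\# = \frac{b+1}{b^{b/(b+1)}} m^{1/(b+1)}$, the cubic-type equation $t^2(h-t)^{2b} = m^2$ has exactly two solutions $t_h, T_h$ in $(0,h)$, satisfying $0 < t_h < \frac{h}{b+1} < T_h < h$. -/

import Mathlib

/-- For h > h^#, the equation t²(h-t)^{2b} = m² has exactly two solutions
t_h, T_h in (0,h), with 0 < t_h < h/(b+1) < T_h < h. -/
theorem two_solutions (b m h : ℝ) (hb : 0 < b) (hm : 0 < m)
    (hh : (b+1) / b ^ (b/(b+1)) * m ^ (1/(b+1)) < h) :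
    ∃ t T : ℝ, 0 < t ∧ t < h/(b+1) ∧ h/(b+1) < T ∧ T < h ∧
      t^2 * (h - t) ^ (2*b) = m^2 ∧ T^2 * (h - T) ^ (2*b) = m^2 ∧
      ∀ s ∈ Set.Ioo (0:ℝ) h, s^2 * (h - s) ^ (2*b) = m^2 → s = t ∨ s = T := by
  have hb1 : (0:ℝ) < b + 1 := by linarith
  have hc : 0 < (b+1) / b ^ (b/(b+1)) * m ^ (1/(b+1)) := by positivity
  have hhpos : 0 < h := hc.trans hh
  set p := h / (b+1) with hpdef
  have hp0 : 0 < p := by positivity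
  have hph : p < h := div_lt_self hhpos (by linarith)
  set g : ℝ → ℝ := fun s => s * (h - s) ^ b with hgdef
  have hgc : Continuous g := by
    apply continuous_id.mul
    exact (continuous_const.sub continuous_id).rpow_const fun x => Or.inr hb.le
  have hderiv : ∀ x ∈ Set.Ioo (0:ℝ) h,
      HasDerivAt g ((h - x) ^ (b-1) * (h - (b+1)*x)) x := by
    intro x hx
    have hx' : 0 < h - x := by linarith [hx.2]
    have h1 : HasDerivAt (fun s : ℝ => h - s) (-1) x := by
      simpa using (hasDerivAt_id' x).const_sub h
    have h2 : HasDerivAt (fun y : ℝ => y ^ b) (b * (h - x) ^ (b-1)) (h - x) :=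
      Real.hasDerivAt_rpow_const (Or.inl hx'.ne')
    have h3 : HasDerivAt (fun s : ℝ => (h - s) ^ b) (b * (h - x) ^ (b-1) * (-1)) x :=
      h2.comp x h1
    have h4 : HasDerivAt g (1 * (h - x) ^ b + x * (b * (h - x) ^ (b - 1) * -1)) x :=
      (hasDerivAt_id x).mul h3
    convert h4 using 1
    have key : (h - x) ^ (b-1) = (h - x) ^ b / (h - x) := by
      rw [Real.rpow_sub hx', Real.rpow_one]
    rw [key]
    field_simp
    ring
  have hmono : StrictMonoOn g (Set.Icc 0 p) := by
    apply strictMonoOn_of_deriv_pos (convex_Icc 0 p) hgc.continuousOn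
    intro x hx
    rw [interior_Icc] at hx
    have hx2 : x ∈ Set.Ioo (0:ℝ) h := ⟨hx.1, hx.2.trans hph⟩
    rw [(hderiv x hx2).deriv]
    have h1 : 0 < (h - x) ^ (b-1) := Real.rpow_pos_of_pos (by linarith [hx2.2]) _
    have h2 : 0 < h - (b+1)*x := by
      have hx' := (lt_div_iff₀ hb1).mp hx.2
      nlinarith
    positivity
  have hanti : StrictAntiOn g (Set.Icc p h) := by
    apply strictAntiOn_of_deriv_neg (convex_Icc p h) hgc.continuousOn
    intro x hx
    rw [interior_Icc] at hx
    have hx2 : x ∈ Set.Ioo (0:ℝ) h := ⟨hp0.trans hx.1, hx.2⟩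
    rw [(hderiv x hx2).deriv]
    have h1 : 0 < (h - x) ^ (b-1) := Real.rpow_pos_of_pos (by linarith [hx.2]) _
    have h2 : h - (b+1)*x < 0 := by
      have hx' := (div_lt_iff₀ hb1).mp hx.1
      nlinarith
    exact mul_neg_of_pos_of_neg h1 h2
  have hbb : 0 < b ^ b := Real.rpow_pos_of_pos hb b
  have hb1b1 : 0 < (b+1) ^ (b+1) := Real.rpow_pos_of_pos hb1 (b+1)
  have hhp : h - p = h * b / (b+1) := by
    rw [hpdef]; field_simp; ring
  have hgp : g p = h ^ (b+1) * b ^ b / (b+1) ^ (b+1) := by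
    show p * (h - p) ^ b = _
    rw [hhp, hpdef, Real.div_rpow (by positivity) hb1.le,
        Real.mul_rpow hhpos.le hb.le]
    have e1 : h ^ (b+1) = h ^ b * h := Real.rpow_add_one hhpos.ne' b
    have e2 : (b+1:ℝ) ^ (b+1) = (b+1) ^ b * (b+1) := Real.rpow_add_one hb1.ne' b
    have hb1bpos : 0 < (b+1:ℝ) ^ b := Real.rpow_pos_of_pos hb1 b
    rw [e1, e2]
    field_simp
  have hpow : (b+1) ^ (b+1) * m < h ^ (b+1) * b ^ b := by
    have h1 : ((b+1) / b ^ (b/(b+1)) * m ^ (1/(b+1))) ^ (b+1) < h ^ (b+1) :=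
      Real.rpow_lt_rpow hc.le hh hb1
    have e1 : (b ^ (b/(b+1))) ^ (b+1) = b ^ b := by
      rw [← Real.rpow_mul hb.le]
      congr 1
      field_simp
    have e2 : (m ^ (1/(b+1))) ^ (b+1) = m := by
      rw [← Real.rpow_mul hm.le, show 1/(b+1)*(b+1) = 1 by field_simp,
        Real.rpow_one]
    have h2 : ((b+1) / b ^ (b/(b+1)) * m ^ (1/(b+1))) ^ (b+1)
        = (b+1) ^ (b+1) / b ^ b * m := by
      rw [Real.mul_rpow (by positivity) (by positivity),
          Real.div_rpow hb1.le (by positivity), e1, e2]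
    rw [h2, div_mul_eq_mul_div, div_lt_iff₀ hbb] at h1
    linarith
  have hMm : m < g p := by
    rw [hgp, lt_div_iff₀ hb1b1]
    linarith
  have hg0 : g 0 = 0 := by simp [hgdef]
  have hgh : g h = 0 := by simp [hgdef, Real.zero_rpow hb.ne']
  obtain ⟨t, ht, hgt⟩ : ∃ t ∈ Set.Ioo (0:ℝ) p, g t = m := by
    have hiv := intermediate_value_Ioo hp0.le hgc.continuousOn
    have hmem : m ∈ Set.Ioo (g 0) (g p) := by rw [hg0]; exact ⟨hm, hMm⟩
    obtain ⟨t, ht, hgt⟩ := hiv hmem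
    exact ⟨t, ht, hgt⟩
  obtain ⟨T, hT, hgT⟩ : ∃ T ∈ Set.Ioo p h, g T = m := by
    have hiv := intermediate_value_Ioo' hph.le hgc.continuousOn
    have hmem : m ∈ Set.Ioo (g h) (g p) := by rw [hgh]; exact ⟨hm, hMm⟩
    obtain ⟨T, hT, hgT⟩ := hiv hmem
    exact ⟨T, hT, hgT⟩
  have hsq : ∀ s : ℝ, s < h → s ^ 2 * (h - s) ^ (2*b) = (g s) ^ 2 := by
    intro s hs
    have e : (h - s) ^ (2*b) = ((h - s) ^ b) ^ 2 := by
      rw [show 2*b = b*2 by ring, Real.rpow_mul (by linarith : (0:ℝ) ≤ h - s),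
        show ((2:ℝ)) = ((2:ℕ):ℝ) by norm_num, Real.rpow_natCast]
    rw [e, hgdef]
    ring
  refine ⟨t, T, ht.1, ht.2, hT.1, hT.2, ?_, ?_, ?_⟩
  · rw [hsq t (ht.2.trans hph), hgt]
  · rw [hsq T hT.2, hgT]
  · intro s hs heq
    have hgs : g s = m := by
      have h2 : (g s) ^ 2 = m ^ 2 := by rw [← hsq s hs.2]; exact heq
      have hgs0 : 0 < g s := by
        have : 0 < (h - s) ^ b := Real.rpow_pos_of_pos (by linarith [hs.2]) b
        exact mul_pos hs.1 this
      have hfact : (g s - m) * (g s + m) = 0 := by linear_combination h2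
      rcases mul_eq_zero.mp hfact with h' | h'
      · linarith
      · linarith
    rcases le_or_gt s p with hsp | hsp
    · left
      exact hmono.injOn ⟨hs.1.le, hsp⟩ ⟨ht.1.le, ht.2.le⟩ (by rw [hgs, hgt])
    · right
      exact hanti.injOn ⟨hsp.le, hs.2.le⟩ ⟨hT.1.le, hT.2.le⟩ (by rw [hgs, hgT])
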